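/- Let α > 0 and β > −1/2. Define for n > 0 the optimized hyperrectangle risk R_o(n) = (Σ_{i=1}^{d} i^β)²/(n + Σ_{i=1}^{d} i^{2α+2β+1}) + Σ_{i=d+1}^{∞} i^{−(2α+1)}, where d = d_o(n) = max{k : Σ_{i=1}^{k} i^β(k^{2α+β+1} − i^{2α+β+1}) ≤ n}. Then R_o(n) ∼ B_H · n^{−α/(α+β+1)} as n → ∞, where B_H = ((2α+β+1)/(2α(β+1))) · ((2α+β+1)/(2(β+1)(α+β+1)))^{α/(α+β+1)}. -/

import Mathlib

open Filter Finset

lemma sum_rpow_bounds (r : ℝ) (hr : -1 < r) (k : ℕ) (hk : 1 ≤ k) :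
    ((k:ℝ)^(r+1) - 1)/(r+1) ≤ (∑ i ∈ Icc 1 k, (i:ℝ)^r) ∧
    (∑ i ∈ Icc 1 k, (i:ℝ)^r) ≤ ((k:ℝ)^(r+1) - 1)/(r+1) + 1 + (k:ℝ)^r := by
  have hint : ∫ x in (1:ℝ)..((k:ℕ):ℝ), x ^ r = ((k:ℝ) ^ (r+1) - 1) / (r+1) := by
    rw [integral_rpow (Or.inl hr), Real.one_rpow]
  have hnn : ∀ i : ℕ, (0:ℝ) ≤ (i:ℝ)^r := fun i => Real.rpow_nonneg (Nat.cast_nonneg i) r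
  have hIcc : Icc 1 k = Ico 1 (k+1) := by rw [Finset.Ico_add_one_right_eq_Icc]
  have hsplit : (∑ i ∈ Icc 1 k, (i:ℝ)^r) = (∑ i ∈ Ico 1 k, (i:ℝ)^r) + (k:ℝ)^r := by
    rw [hIcc, Finset.sum_Ico_succ_top hk]
  have hshift : (∑ i ∈ Ico 1 k, ((i+1:ℕ):ℝ)^r) = ∑ i ∈ Ico 2 (k+1), (i:ℝ)^r :=
    Finset.sum_Ico_add' (fun i : ℕ => (i:ℝ)^r) 1 k 1
  have hsub : (∑ i ∈ Ico 2 (k+1), (i:ℝ)^r) ≤ ∑ i ∈ Icc 1 k, (i:ℝ)^r := by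
    rw [hIcc]
    exact Finset.sum_le_sum_of_subset_of_nonneg
      (Finset.Ico_subset_Ico (by norm_num) le_rfl) (fun i _ _ => hnn i)
  have hbot : (∑ i ∈ Icc 1 k, (i:ℝ)^r) = 1 + ∑ i ∈ Ico 2 (k+1), (i:ℝ)^r := by
    rw [hIcc, Finset.sum_eq_sum_Ico_succ_bot (by omega) (fun i : ℕ => (i:ℝ)^r)]
    norm_num
  rcases le_or_gt 0 r with hr0 | hr0
  · have hmono : MonotoneOn (fun x : ℝ => x ^ r) (Set.Icc ((1:ℕ):ℝ) ((k:ℕ):ℝ)) := by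
      intro x hx y hy hxy
      exact Real.rpow_le_rpow (le_trans zero_le_one (by exact_mod_cast hx.1)) hxy hr0
    constructor
    · calc ((k:ℝ)^(r+1) - 1)/(r+1) = ∫ x in (1:ℝ)..((k:ℕ):ℝ), x ^ r := hint.symm
        _ ≤ ∑ i ∈ Ico 1 k, ((i+1:ℕ):ℝ)^r := by
            have := hmono.integral_le_sum_Ico (by exact_mod_cast hk)
            exact_mod_cast this
        _ = ∑ i ∈ Ico 2 (k+1), (i:ℝ)^r := hshift
        _ ≤ _ := hsub
    · calc (∑ i ∈ Icc 1 k, (i:ℝ)^r) = (∑ i ∈ Ico 1 k, (i:ℝ)^r) + (k:ℝ)^r := hsplit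
        _ ≤ (∫ x in (1:ℝ)..((k:ℕ):ℝ), x ^ r) + (k:ℝ)^r := by
            have := hmono.sum_le_integral_Ico (by exact_mod_cast hk)
            have h' : (∑ i ∈ Ico 1 k, (i:ℝ)^r) ≤ ∫ x in (1:ℝ)..((k:ℕ):ℝ), x ^ r := by
              exact_mod_cast this
            linarith
        _ = ((k:ℝ)^(r+1) - 1)/(r+1) + (k:ℝ)^r := by rw [hint]
        _ ≤ _ := by linarith
  · have hanti : AntitoneOn (fun x : ℝ => x ^ r) (Set.Icc ((1:ℕ):ℝ) ((k:ℕ):ℝ)) := by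
      intro x hx y hy hxy
      exact Real.rpow_le_rpow_of_nonpos (lt_of_lt_of_le one_pos (by exact_mod_cast hx.1)) hxy hr0.le
    constructor
    · calc ((k:ℝ)^(r+1) - 1)/(r+1) = ∫ x in (1:ℝ)..((k:ℕ):ℝ), x ^ r := hint.symm
        _ ≤ ∑ i ∈ Ico 1 k, (i:ℝ)^r := by
            have := hanti.integral_le_sum_Ico (by exact_mod_cast hk)
            exact_mod_cast this
        _ ≤ _ := by rw [hsplit]; linarith [hnn k]
    · calc (∑ i ∈ Icc 1 k, (i:ℝ)^r) = 1 + ∑ i ∈ Ico 2 (k+1), (i:ℝ)^r := hbot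
        _ = 1 + ∑ i ∈ Ico 1 k, ((i+1:ℕ):ℝ)^r := by rw [hshift]
        _ ≤ 1 + ∫ x in (1:ℝ)..((k:ℕ):ℝ), x ^ r := by
            have := hanti.sum_le_integral_Ico (by exact_mod_cast hk)
            have h' : (∑ i ∈ Ico 1 k, ((i+1:ℕ):ℝ)^r) ≤ ∫ x in (1:ℝ)..((k:ℕ):ℝ), x ^ r := by
              exact_mod_cast this
            linarith
        _ = ((k:ℝ)^(r+1) - 1)/(r+1) + 1 := by rw [hint]; ring
        _ ≤ _ := by linarith [hnn k]

lemma tendsto_rpow_nat_inv (t : ℝ) (ht : 0 < t) :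
    Tendsto (fun k : ℕ => ((k:ℝ)^t)⁻¹) atTop (nhds 0) := by
  have h := (tendsto_rpow_atTop ht).comp tendsto_natCast_atTop_atTop (α := ℕ)
  exact h.inv_tendsto_atTop

lemma tendsto_sum_rpow (r : ℝ) (hr : -1 < r) :
    Tendsto (fun k : ℕ => (∑ i ∈ Icc 1 k, (i:ℝ)^r) / (k:ℝ)^(r+1)) atTop
      (nhds (1/(r+1))) := by
  have hr1 : 0 < r + 1 := by linarith
  have hinv := tendsto_rpow_nat_inv (r+1) hr1
  have hinv1 : Tendsto (fun k : ℕ => ((k:ℝ))⁻¹) atTop (nhds 0) :=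
    tendsto_inv_atTop_zero.comp tendsto_natCast_atTop_atTop
  -- lower bound sequence
  have hlow : Tendsto (fun k : ℕ => (1 - ((k:ℝ)^(r+1))⁻¹)/(r+1)) atTop (nhds (1/(r+1))) := by
    have : Tendsto (fun k : ℕ => (1 - ((k:ℝ)^(r+1))⁻¹)) atTop (nhds 1) := by
      simpa using (tendsto_const_nhds (x := (1:ℝ)) (f := atTop (α := ℕ))).sub hinv
    simpa using this.div_const (r+1)
  have hup : Tendsto (fun k : ℕ => (1 - ((k:ℝ)^(r+1))⁻¹)/(r+1) + ((k:ℝ)^(r+1))⁻¹ + ((k:ℝ))⁻¹)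
      atTop (nhds (1/(r+1))) := by
    have := (hlow.add hinv).add hinv1
    simpa using this
  refine tendsto_of_tendsto_of_tendsto_of_le_of_le' hlow hup ?_ ?_
  · filter_upwards [eventually_ge_atTop 1] with k hk
    have hk0 : (0:ℝ) < (k:ℝ) := by exact_mod_cast Nat.pos_of_ne_zero (by omega)
    have hkp : (0:ℝ) < (k:ℝ)^(r+1) := Real.rpow_pos_of_pos hk0 _
    have hb := (sum_rpow_bounds r hr k hk).1
    have heq : (1 - ((k:ℝ)^(r+1))⁻¹)/(r+1) = (((k:ℝ)^(r+1)-1)/(r+1))/((k:ℝ)^(r+1)) := by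
      have hone : (1:ℝ) - ((k:ℝ)^(r+1))⁻¹ = ((k:ℝ)^(r+1)-1)/((k:ℝ)^(r+1)) := by
        field_simp
      rw [hone, div_div, div_div, mul_comm]
    rw [heq]
    gcongr
  · filter_upwards [eventually_ge_atTop 1] with k hk
    have hk0 : (0:ℝ) < (k:ℝ) := by exact_mod_cast Nat.pos_of_ne_zero (by omega)
    have hkp : (0:ℝ) < (k:ℝ)^(r+1) := Real.rpow_pos_of_pos hk0 _
    have hb := (sum_rpow_bounds r hr k hk).2
    have hdiv : (k:ℝ)^r / (k:ℝ)^(r+1) = ((k:ℝ))⁻¹ := by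
      rw [← Real.rpow_sub hk0, show r - (r+1) = -1 by ring, Real.rpow_neg_one]
    have heq : (((k:ℝ)^(r+1) - 1)/(r+1) + 1 + (k:ℝ)^r) / ((k:ℝ)^(r+1)) =
        (1 - ((k:ℝ)^(r+1))⁻¹)/(r+1) + ((k:ℝ)^(r+1))⁻¹ + ((k:ℝ))⁻¹ := by
      rw [add_div, add_div, ← hdiv]
      congr 2
      · have hone : (1:ℝ) - ((k:ℝ)^(r+1))⁻¹ = ((k:ℝ)^(r+1)-1)/((k:ℝ)^(r+1)) := by
          field_simp
        rw [hone, div_div, div_div, mul_comm]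
      · rw [one_div]
    rw [← heq]
    gcongr

-- integral evaluation and bounds on [a, a+1]
lemma rpow_step_bounds (s2 a : ℝ) (hs : 0 < s2) (ha : 1 ≤ a) :
    (a+1)^(-(s2+1)) ≤ (1/s2) * (a^(-s2) - (a+1)^(-s2)) ∧
    (1/s2) * (a^(-s2) - (a+1)^(-s2)) ≤ a^(-(s2+1)) := by
  have ha0 : (0:ℝ) < a := lt_of_lt_of_le one_pos ha
  have hne : (0:ℝ) ∉ Set.uIcc a (a+1) := by
    rw [Set.uIcc_of_le (by linarith)]
    intro h
    exact absurd h.1 (by linarith)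
  have heval : ∫ x in a..(a+1), x ^ (-(s2+1)) =
      (1/s2) * (a^(-s2) - (a+1)^(-s2)) := by
    rw [integral_rpow (Or.inr ⟨by intro h; apply hs.ne'; linarith [neg_eq_iff_eq_neg.mp h], hne⟩)]
    rw [show -(s2+1)+1 = -s2 by ring, div_neg]
    field_simp
    ring
  have hintg : IntervalIntegrable (fun x : ℝ => x ^ (-(s2+1))) MeasureTheory.volume a (a+1) :=
    intervalIntegral.intervalIntegrable_rpow (Or.inr hne)
  constructor
  · rw [← heval]
    have : ∫ x in a..(a+1), ((a+1)^(-(s2+1)) : ℝ) ≤ ∫ x in a..(a+1), x ^ (-(s2+1)) := by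
      apply intervalIntegral.integral_mono_on (by linarith) (intervalIntegrable_const) hintg
      intro x hx
      exact Real.rpow_le_rpow_of_nonpos (by linarith [hx.1]) hx.2 (by linarith)
    simpa using this
  · rw [← heval]
    have : ∫ x in a..(a+1), x ^ (-(s2+1)) ≤ ∫ x in a..(a+1), (a^(-(s2+1)) : ℝ) := by
      apply intervalIntegral.integral_mono_on (by linarith) hintg (intervalIntegrable_const)
      intro x hx
      exact Real.rpow_le_rpow_of_nonpos ha0 hx.1 (by linarith)
    simpa using this

-- telescoping hasSum
lemma hasSum_telescope_rpow (s2 c : ℝ) (hs : 0 < s2) (hc : 1 ≤ c) :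
    HasSum (fun j : ℕ => (1/s2) * ((c+j)^(-s2) - (c+(j+1:ℕ))^(-s2))) ((1/s2) * c^(-s2)) := by
  have hpos : ∀ j : ℕ, (0:ℝ) < c + j := fun j => by positivity
  have hnn : ∀ j : ℕ, 0 ≤ (1/s2) * ((c+j)^(-s2) - (c+(j+1:ℕ))^(-s2)) := by
    intro j
    have : (c+(j+1:ℕ))^(-s2) ≤ (c+j)^(-s2) := by
      apply Real.rpow_le_rpow_of_nonpos (hpos j) (by push_cast; linarith) (by linarith)
    have h1 : (0:ℝ) < 1/s2 := by positivity
    nlinarith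
  rw [hasSum_iff_tendsto_nat_of_nonneg hnn]
  have hps : ∀ n : ℕ, (∑ j ∈ range n, (1/s2) * ((c+j)^(-s2) - (c+(j+1:ℕ))^(-s2))) =
      (1/s2) * c^(-s2) - (1/s2) * (c+n)^(-s2) := by
    intro n
    rw [← Finset.mul_sum, Finset.sum_range_sub' (fun j : ℕ => ((c+j)^(-s2) : ℝ))]
    push_cast
    ring_nf
  have hlim : Tendsto (fun n : ℕ => (1/s2) * (c+n)^(-s2)) atTop (nhds 0) := by
    have h1 : Tendsto (fun n : ℕ => ((c+n):ℝ)) atTop atTop :=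
      tendsto_atTop_add_const_left atTop c tendsto_natCast_atTop_atTop
    have h2 : Tendsto (fun n : ℕ => ((c+n):ℝ)^(-s2)) atTop (nhds 0) :=
      (tendsto_rpow_neg_atTop hs).comp h1
    simpa using h2.const_mul (1/s2)
  have := (tendsto_const_nhds (x := (1/s2) * c^(-s2)) (f := atTop (α := ℕ))).sub hlim
  simp only [sub_zero] at this
  exact Tendsto.congr (fun n => (hps n).symm) this

-- tail bounds
lemma tail_tsum_bounds (s2 : ℝ) (hs : 0 < s2) (d : ℕ) (hd : 1 ≤ d) :
    (1/s2) * ((d:ℝ)+1)^(-s2) ≤ (∑' j : ℕ, ((j:ℝ) + (d:ℝ) + 1) ^ (-(s2+1))) ∧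
    (∑' j : ℕ, ((j:ℝ) + (d:ℝ) + 1) ^ (-(s2+1))) ≤ (1/s2) * (d:ℝ)^(-s2) := by
  have hd1 : (1:ℝ) ≤ (d:ℝ) := by exact_mod_cast hd
  have hub := hasSum_telescope_rpow s2 (d:ℝ) hs hd1
  have hlb := hasSum_telescope_rpow s2 ((d:ℝ)+1) hs (by linarith)
  have hptU : ∀ j : ℕ, ((j:ℝ) + (d:ℝ) + 1) ^ (-(s2+1)) ≤
      (1/s2) * (((d:ℝ)+j)^(-s2) - ((d:ℝ)+(j+1:ℕ))^(-s2)) := by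
    intro j
    have h := (rpow_step_bounds s2 ((d:ℝ)+j) hs (le_add_of_le_of_nonneg hd1 (Nat.cast_nonneg j))).1
    have e1 : ((j:ℝ)+(d:ℝ)+1) = ((d:ℝ)+j)+1 := by ring
    have e2 : ((d:ℝ)+((j:ℕ)+1:ℕ)) = ((d:ℝ)+j)+1 := by push_cast; ring
    rw [e1, e2]
    exact h
  have hptL : ∀ j : ℕ, (1/s2) * ((((d:ℝ)+1)+j)^(-s2) - (((d:ℝ)+1)+(j+1:ℕ))^(-s2)) ≤
      ((j:ℝ) + (d:ℝ) + 1) ^ (-(s2+1)) := by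
    intro j
    have h := (rpow_step_bounds s2 (((d:ℝ)+1)+j) hs (by linarith [(Nat.cast_nonneg j : (0:ℝ) ≤ (j:ℝ))])).2
    have e1 : ((j:ℝ)+(d:ℝ)+1) = ((d:ℝ)+1)+j := by ring
    have e2 : ((((d:ℝ)+1))+((j:ℕ)+1:ℕ)) = (((d:ℝ)+1)+j)+1 := by push_cast; ring
    rw [e1]
    calc (1/s2) * ((((d:ℝ)+1)+j)^(-s2) - (((d:ℝ)+1)+(j+1:ℕ))^(-s2))
        = (1/s2) * ((((d:ℝ)+1)+j)^(-s2) - ((((d:ℝ)+1)+j)+1)^(-s2)) := by rw [e2]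
      _ ≤ _ := h
  have hT : Summable (fun j : ℕ => ((j:ℝ) + (d:ℝ) + 1) ^ (-(s2+1))) := by
    apply Summable.of_nonneg_of_le (fun j => Real.rpow_nonneg (by positivity) _) hptU
      hub.summable
  constructor
  · calc (1/s2) * ((d:ℝ)+1)^(-s2) = ∑' j : ℕ,
        (1/s2) * ((((d:ℝ)+1)+j)^(-s2) - (((d:ℝ)+1)+(j+1:ℕ))^(-s2)) := hlb.tsum_eq.symm
      _ ≤ _ := Summable.tsum_le_tsum hptL hlb.summable hT
  · calc (∑' j : ℕ, ((j:ℝ) + (d:ℝ) + 1) ^ (-(s2+1)))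
        ≤ ∑' j : ℕ, (1/s2) * (((d:ℝ)+j)^(-s2) - ((d:ℝ)+(j+1:ℕ))^(-s2)) :=
          Summable.tsum_le_tsum hptU hT hub.summable
      _ = (1/s2) * (d:ℝ)^(-s2) := hub.tsum_eq

lemma tendsto_tail_mul (s2 : ℝ) (hs : 0 < s2) :
    Tendsto (fun d : ℕ => (d:ℝ)^s2 * ∑' j : ℕ, ((j:ℝ)+(d:ℝ)+1)^(-(s2+1))) atTop
      (nhds (1/s2)) := by
  have hlow : Tendsto (fun d : ℕ => (1/s2) * ((d:ℝ)/((d:ℝ)+1))^s2) atTop (nhds (1/s2)) := by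
    have h1 : Tendsto (fun d : ℕ => (d:ℝ)/((d:ℝ)+1)) atTop (nhds 1) := by
      simpa using tendsto_natCast_div_add_atTop (1 : ℝ)
    have h2 : Tendsto (fun d : ℕ => ((d:ℝ)/((d:ℝ)+1))^s2) atTop (nhds 1) := by
      have hc := (Real.continuousAt_rpow_const 1 s2 (Or.inl one_ne_zero)).tendsto
      have := hc.comp h1
      simpa [Real.one_rpow, Function.comp_def] using this
    simpa using h2.const_mul (1/s2)
  refine tendsto_of_tendsto_of_tendsto_of_le_of_le' hlow tendsto_const_nhds ?_ ?_
  · filter_upwards [eventually_ge_atTop 1] with d hd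
    have hd0 : (0:ℝ) < (d:ℝ) := by exact_mod_cast Nat.pos_of_ne_zero (by omega)
    have hb := (tail_tsum_bounds s2 hs d hd).1
    have key : (1/s2) * ((d:ℝ)/((d:ℝ)+1))^s2 = (d:ℝ)^s2 * ((1/s2) * ((d:ℝ)+1)^(-s2)) := by
      rw [Real.div_rpow hd0.le (by positivity), Real.rpow_neg (by positivity)]
      field_simp
    rw [key]
    have := mul_le_mul_of_nonneg_left hb (le_of_lt (Real.rpow_pos_of_pos hd0 s2))
    exact this
  · filter_upwards [eventually_ge_atTop 1] with d hd
    have hd0 : (0:ℝ) < (d:ℝ) := by exact_mod_cast Nat.pos_of_ne_zero (by omega)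
    have hb := (tail_tsum_bounds s2 hs d hd).2
    have := mul_le_mul_of_nonneg_left hb (le_of_lt (Real.rpow_pos_of_pos hd0 s2))
    refine this.trans_eq ?_
    rw [Real.rpow_neg hd0.le]
    rw [mul_comm (1/s2)]
    rw [← mul_assoc, mul_inv_cancel₀ (ne_of_gt (Real.rpow_pos_of_pos hd0 s2)), one_mul]

noncomputable def Sfun (α β : ℝ) (k : ℕ) : ℝ :=
  ∑ i ∈ Icc 1 k, (i:ℝ)^β * ((k:ℝ)^(2*α+β+1) - (i:ℝ)^(2*α+β+1))

lemma Sfun_mono (α β : ℝ) (hα : 0 < α) (hβ : -(1/2:ℝ) < β) : Monotone (Sfun α β) := by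
  intro k k' hkk
  have hp : 0 ≤ 2*α+β+1 := by linarith
  calc Sfun α β k = ∑ i ∈ Icc 1 k, (i:ℝ)^β * ((k:ℝ)^(2*α+β+1) - (i:ℝ)^(2*α+β+1)) := rfl
    _ ≤ ∑ i ∈ Icc 1 k, (i:ℝ)^β * ((k':ℝ)^(2*α+β+1) - (i:ℝ)^(2*α+β+1)) := by
        apply Finset.sum_le_sum
        intro i hi
        have h1 : (k:ℝ)^(2*α+β+1) ≤ (k':ℝ)^(2*α+β+1) :=
          Real.rpow_le_rpow (Nat.cast_nonneg k) (by exact_mod_cast hkk) hp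
        have h2 : (0:ℝ) ≤ (i:ℝ)^β := Real.rpow_nonneg (Nat.cast_nonneg i) β
        nlinarith
    _ ≤ Sfun α β k' := by
        apply Finset.sum_le_sum_of_subset_of_nonneg (Finset.Icc_subset_Icc le_rfl hkk)
        intro i hi _
        have hik : i ≤ k' := (Finset.mem_Icc.mp hi).2
        have h1 : (i:ℝ)^(2*α+β+1) ≤ (k':ℝ)^(2*α+β+1) :=
          Real.rpow_le_rpow (Nat.cast_nonneg i) (by exact_mod_cast hik) hp
        have h2 : (0:ℝ) ≤ (i:ℝ)^β := Real.rpow_nonneg (Nat.cast_nonneg i) β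
        nlinarith

lemma Sfun_lim (α β : ℝ) (hα : 0 < α) (hβ : -(1/2:ℝ) < β) :
    Tendsto (fun k : ℕ => Sfun α β k / (k:ℝ)^(2*α+2*β+2)) atTop
      (nhds ((2*α+β+1)/(2*(β+1)*(α+β+1)))) := by
  have hβ1 : (0:ℝ) < β+1 := by linarith
  have h2 : (-1:ℝ) < β + (2*α+β+1) := by linarith
  have hlim := (tendsto_sum_rpow β (by linarith)).sub (tendsto_sum_rpow (β+(2*α+β+1)) h2)
  have hval : 1/(β+1) - 1/((β+(2*α+β+1))+1) = (2*α+β+1)/(2*(β+1)*(α+β+1)) := by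
    rw [div_sub_div _ _ (by linarith) (by linarith), div_eq_div_iff (by nlinarith) (by nlinarith)]
    ring
  rw [← hval]
  apply Tendsto.congr' _ hlim
  filter_upwards [eventually_ge_atTop 1] with k hk
  have hk0 : (0:ℝ) < (k:ℝ) := by exact_mod_cast Nat.pos_of_ne_zero (by omega)
  have hsplit : Sfun α β k = (k:ℝ)^(2*α+β+1) * (∑ i ∈ Icc 1 k, (i:ℝ)^β)
      - ∑ i ∈ Icc 1 k, (i:ℝ)^(β+(2*α+β+1)) := by
    unfold Sfun
    rw [Finset.mul_sum]
    rw [← Finset.sum_sub_distrib]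
    apply Finset.sum_congr rfl
    intro i hi
    have hi0 : (0:ℝ) < (i:ℝ) := by
      exact_mod_cast Nat.pos_of_ne_zero (by have := (Finset.mem_Icc.mp hi).1; omega)
    have hcomb : (i:ℝ)^β * (i:ℝ)^(2*α+β+1) = (i:ℝ)^(β+(2*α+β+1)) :=
      (Real.rpow_add hi0 _ _).symm
    rw [mul_sub, ← hcomb]
    ring
  have e1 : (k:ℝ)^(2*α+2*β+2) = (k:ℝ)^(2*α+β+1) * (k:ℝ)^(β+1) := by
    rw [← Real.rpow_add hk0]; congr 1; ring
  have e2 : (k:ℝ)^(2*α+2*β+2) = (k:ℝ)^((β+(2*α+β+1))+1) := by congr 1; ring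
  have hkp : (0:ℝ) < (k:ℝ)^(2*α+β+1) := Real.rpow_pos_of_pos hk0 _
  rw [hsplit, sub_div]
  congr 1
  · rw [e1, mul_div_mul_left _ _ (ne_of_gt hkp)]
  · rw [e2]

lemma Sfun_top (α β : ℝ) (hα : 0 < α) (hβ : -(1/2:ℝ) < β) :
    Tendsto (Sfun α β) atTop atTop := by
  have hL : (0:ℝ) < (2*α+β+1)/(2*(β+1)*(α+β+1)) := by
    apply div_pos (by linarith)
    nlinarith
  have hkm : Tendsto (fun k : ℕ => (k:ℝ)^(2*α+2*β+2)) atTop atTop :=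
    (tendsto_rpow_atTop (by linarith)).comp tendsto_natCast_atTop_atTop
  have := (Sfun_lim α β hα hβ).pos_mul_atTop hL hkm
  apply this.congr'
  filter_upwards [eventually_ge_atTop 1] with k hk
  have hk0 : (0:ℝ) < (k:ℝ) := by exact_mod_cast Nat.pos_of_ne_zero (by omega)
  field_simp

section
variable {α β : ℝ} (hα : 0 < α) (hβ : -(1/2:ℝ) < β)
include hα hβ

lemma Sfun_bdd (n : ℝ) : BddAbove {k : ℕ | Sfun α β k ≤ n} := by
  obtain ⟨K, hK⟩ := eventually_atTop.mp (tendsto_atTop.mp (Sfun_top α β hα hβ) (n+1))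
  refine ⟨K, fun k hk => ?_⟩
  by_contra h
  push_neg at h
  have h1 := hK k (le_of_lt h)
  have h2 : Sfun α β k ≤ n := hk
  linarith

omit hα hβ in
lemma Sfun_zero : Sfun α β 0 = 0 := by
  unfold Sfun
  rw [Finset.Icc_eq_empty (by omega)]
  simp

lemma dO_spec (n : ℝ) (hn : 0 ≤ n) (d : ℕ) (hd : d = sSup {k : ℕ | Sfun α β k ≤ n}) :
    Sfun α β d ≤ n ∧ n < Sfun α β (d+1) := by
  have hne : {k : ℕ | Sfun α β k ≤ n}.Nonempty := by
    refine ⟨0, ?_⟩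
    show Sfun α β 0 ≤ n
    rw [Sfun_zero]
    exact hn
  have hbdd := Sfun_bdd hα hβ (α := α) (β := β) n
  constructor
  · have := Nat.sSup_mem hne hbdd
    rw [← hd] at this
    exact this
  · by_contra h
    push_neg at h
    have : d + 1 ∈ {k : ℕ | Sfun α β k ≤ n} := h
    have h2 := le_csSup hbdd this
    rw [← hd] at h2
    omega

lemma dO_atTop (dO : ℝ → ℕ)
    (hdO : ∀ n : ℝ, dO n = sSup {k : ℕ | Sfun α β k ≤ n}) :
    Tendsto dO atTop atTop := by
  rw [tendsto_atTop]
  intro K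
  filter_upwards [eventually_ge_atTop (Sfun α β K)] with n hn
  have : K ∈ {k : ℕ | Sfun α β k ≤ n} := hn
  have h2 := le_csSup (Sfun_bdd hα hβ (α := α) (β := β) n) this
  rw [hdO]
  exact h2

lemma dO_ratio (dO : ℝ → ℕ)
    (hdO : ∀ n : ℝ, dO n = sSup {k : ℕ | Sfun α β k ≤ n}) :
    Tendsto (fun n : ℝ => ((dO n : ℝ))^(2*α+2*β+2) / n) atTop
      (nhds (2*(β+1)*(α+β+1)/(2*α+β+1))) := by
  set L := (2*α+β+1)/(2*(β+1)*(α+β+1)) with hLdef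
  have hL : 0 < L := by
    apply div_pos (by linarith)
    nlinarith
  have hLinv : 2*(β+1)*(α+β+1)/(2*α+β+1) = L⁻¹ := by
    rw [hLdef, inv_div]
  rw [hLinv]
  have hdtop := dO_atTop hα hβ dO hdO
  -- upper comparison function u, lower v
  have hu : Tendsto (fun n : ℝ => (Sfun α β (dO n) / ((dO n : ℝ))^(2*α+2*β+2))⁻¹)
      atTop (nhds L⁻¹) :=
    ((Sfun_lim α β hα hβ).comp hdtop).inv₀ (ne_of_gt hL)
  have hψ : Tendsto (fun k : ℕ => ((k:ℝ))^(2*α+2*β+2) / Sfun α β (k+1)) atTop (nhds L⁻¹) := by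
    have hf1 : Tendsto (fun k : ℕ => ((k:ℝ)/((k:ℝ)+1))^(2*α+2*β+2)) atTop (nhds 1) := by
      have h1 : Tendsto (fun k : ℕ => (k:ℝ)/((k:ℝ)+1)) atTop (nhds 1) := by
        simpa using tendsto_natCast_div_add_atTop (1 : ℝ)
      have hc := (Real.continuousAt_rpow_const 1 (2*α+2*β+2) (Or.inl one_ne_zero)).tendsto
      have := hc.comp h1
      simpa [Real.one_rpow, Function.comp_def] using this
    have hf2 : Tendsto (fun k : ℕ => (Sfun α β (k+1) / (((k:ℕ)+1:ℕ):ℝ)^(2*α+2*β+2))⁻¹)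
        atTop (nhds L⁻¹) := by
      have := ((Sfun_lim α β hα hβ).comp (tendsto_add_atTop_nat 1)).inv₀ (ne_of_gt hL)
      exact this
    have := hf1.mul hf2
    rw [one_mul] at this
    apply Tendsto.congr' _ this
    filter_upwards [eventually_atTop.mpr ⟨1, fun k (hk : 1 ≤ k) => hk⟩,
      (Sfun_top α β hα hβ).comp (tendsto_add_atTop_nat 1) |>.eventually_ge_atTop 1]
      with k hk hS1
    have hk0 : (0:ℝ) < (k:ℝ) := by exact_mod_cast Nat.pos_of_ne_zero (by omega)
    have hk10 : (0:ℝ) < ((k:ℕ)+1:ℕ) := by positivity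
    have hSpos : (0:ℝ) < Sfun α β (k+1) := lt_of_lt_of_le one_pos hS1
    have hkp1 : (0:ℝ) < (((k:ℕ)+1:ℕ):ℝ)^(2*α+2*β+2) := Real.rpow_pos_of_pos hk10 _
    rw [Real.div_rpow hk0.le (by positivity)]
    have hcast : (((k:ℕ)+1:ℕ):ℝ) = (k:ℝ)+1 := by push_cast; ring
    rw [inv_div, div_mul_div_comm]
    rw [hcast]
    rw [div_eq_div_iff (by positivity) (ne_of_gt hSpos)]
    ring
  have hlow := hψ.comp hdtop
  refine tendsto_of_tendsto_of_tendsto_of_le_of_le' hlow hu ?_ ?_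
  · filter_upwards [eventually_gt_atTop 0] with n hn
    have hspec := dO_spec hα hβ n hn.le (dO n) (hdO n)
    have hdm : (0:ℝ) ≤ ((dO n:ℕ):ℝ)^(2*α+2*β+2) :=
      Real.rpow_nonneg (Nat.cast_nonneg _) _
    show ((dO n : ℝ))^(2*α+2*β+2) / Sfun α β (dO n + 1) ≤ _
    gcongr
    exact hspec.2.le
  · filter_upwards [eventually_gt_atTop 0,
      ((Sfun_top α β hα hβ).comp hdtop).eventually_ge_atTop 1] with n hn hS1
    have hspec := dO_spec hα hβ n hn.le (dO n) (hdO n)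
    have hSpos : (0:ℝ) < Sfun α β (dO n) := lt_of_lt_of_le one_pos hS1
    have hdm : (0:ℝ) ≤ ((dO n:ℕ):ℝ)^(2*α+2*β+2) :=
      Real.rpow_nonneg (Nat.cast_nonneg _) _
    rw [inv_div]
    gcongr
    exact hspec.1

end

/-- Sharp asymptotics of the optimal-allocation minimax linear risk over the Sobolev
hyperrectangle: with d = d_o(n) as in the optimal allocation,
R_o(n) = (Σ_{i≤d} i^β)²/(n + Σ_{i≤d} i^{2α+2β+1}) + Σ_{i>d} i^{−(2α+1)}
∼ B_H n^{−α/(α+β+1)}. -/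
theorem stmt9 (α β : ℝ) (hα : 0 < α) (hβ : -(1/2 : ℝ) < β)
    (dO : ℝ → ℕ)
    (hdO : ∀ n : ℝ, dO n = sSup {k : ℕ |
      ∑ i ∈ Finset.Icc 1 k, (i : ℝ) ^ β *
        ((k : ℝ) ^ (2*α + β + 1) - (i : ℝ) ^ (2*α + β + 1)) ≤ n})
    (R : ℝ → ℝ)
    (hR : ∀ n : ℝ, R n =
      (∑ i ∈ Finset.Icc 1 (dO n), (i : ℝ) ^ β) ^ 2 /
        (n + ∑ i ∈ Finset.Icc 1 (dO n), (i : ℝ) ^ (2*α + 2*β + 1)) +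
      ∑' j : ℕ, ((j : ℝ) + (dO n : ℝ) + 1) ^ (-(2*α + 1))) :
    Tendsto (fun n : ℝ => R n /
        (((2*α+β+1)/(2*α*(β+1))) * ((2*α+β+1)/(2*(β+1)*(α+β+1))) ^ (α/(α+β+1)) *
          n ^ (-(α/(α+β+1)))))
      atTop (nhds 1) := by
  have hβ1 : (0:ℝ) < β+1 := by linarith
  have hαβ1 : (0:ℝ) < α+β+1 := by linarith
  have h2αβ : (0:ℝ) < 2*α+β+1 := by linarith
  set γ := α/(α+β+1) with hγ
  set L := (2*α+β+1)/(2*(β+1)*(α+β+1)) with hLdef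
  have hLpos : 0 < L := div_pos h2αβ (by nlinarith)
  set B := ((2*α+β+1)/(2*α*(β+1))) * L ^ γ with hBdef
  have hBpos : 0 < B := by
    apply mul_pos (div_pos h2αβ (by nlinarith))
    exact Real.rpow_pos_of_pos hLpos γ
  have hdO' : ∀ n : ℝ, dO n = sSup {k : ℕ | Sfun α β k ≤ n} := fun n => hdO n
  have hdtop := dO_atTop hα hβ dO hdO'
  have hratio0 := dO_ratio hα hβ dO hdO'
  have hratio : Tendsto (fun n : ℝ => ((dO n : ℝ))^(2*α+2*β+2) / n) atTop (nhds L⁻¹) := by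
    have : 2*(β+1)*(α+β+1)/(2*α+β+1) = L⁻¹ := by rw [hLdef, inv_div]
    rwa [this] at hratio0
  have hG1 : Tendsto (fun n : ℝ => (∑ i ∈ Icc 1 (dO n), (i:ℝ)^β)/((dO n:ℝ))^(β+1))
      atTop (nhds (1/(β+1))) := (tendsto_sum_rpow β (by linarith)).comp hdtop
  have hG2 : Tendsto (fun n : ℝ =>
      (∑ i ∈ Icc 1 (dO n), (i:ℝ)^(2*α+2*β+1))/((dO n:ℝ))^((2*α+2*β+1)+1))
      atTop (nhds (1/((2*α+2*β+1)+1))) :=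
    (tendsto_sum_rpow (2*α+2*β+1) (by linarith)).comp hdtop
  have hG3 : Tendsto (fun n : ℝ => n/((dO n:ℝ))^(2*α+2*β+2)) atTop (nhds L) := by
    have h := hratio.inv₀ (by positivity)
    simp only [inv_div, inv_inv] at h
    exact h
  have hsum : L + 1/((2*α+2*β+1)+1) = 1/(β+1) := by
    rw [hLdef]
    have hd1 : (0:ℝ) < 2*(β+1)*(α+β+1) := by nlinarith
    have hd2 : (0:ℝ) < (2*α+2*β+1)+1 := by linarith
    rw [div_add_div _ _ (ne_of_gt hd1) (ne_of_gt hd2),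
      div_eq_div_iff (by positivity) (ne_of_gt hβ1)]
    ring
  have hDenNe : L + 1/((2*α+2*β+1)+1) ≠ 0 := by
    rw [hsum]; positivity
  have hA : Tendsto (fun n : ℝ =>
      (∑ i ∈ Icc 1 (dO n), (i:ℝ)^β)^2 /
        (n + ∑ i ∈ Icc 1 (dO n), (i:ℝ)^(2*α+2*β+1)) * ((dO n:ℝ))^(2*α))
      atTop (nhds (1/(β+1))) := by
    have hlim := (hG1.mul hG1).div (hG3.add hG2) hDenNe
    have hval : (1/(β+1) * (1/(β+1))) / (L + 1/((2*α+2*β+1)+1)) = 1/(β+1) := by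
      rw [hsum, mul_div_assoc, div_self (by positivity), mul_one]
    rw [← hval]
    apply Tendsto.congr' _ hlim
    filter_upwards [eventually_gt_atTop 0, hdtop.eventually_ge_atTop 1] with n hn hd1
    set D := ((dO n : ℕ):ℝ) with hD
    have hD0 : (0:ℝ) < D := by
      rw [hD]; exact_mod_cast Nat.pos_of_ne_zero (by omega)
    set a := ∑ i ∈ Icc 1 (dO n), (i:ℝ)^β with ha
    set b := ∑ i ∈ Icc 1 (dO n), (i:ℝ)^(2*α+2*β+1) with hb
    have hbnn : 0 ≤ b := Finset.sum_nonneg fun i _ => Real.rpow_nonneg (Nat.cast_nonneg i) _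
    have hnb : (0:ℝ) < n + b := by linarith
    have em' : D^((2*α+2*β+1)+1) = D^(2*α+2*β+2) := by congr 1; ring
    have e : D^(2*α+2*β+2) = D^(β+1) * D^(β+1) * D^(2*α) := by
      rw [← Real.rpow_add hD0, ← Real.rpow_add hD0]; congr 1; ring
    have hDb1 : D^(β+1) ≠ 0 := ne_of_gt (Real.rpow_pos_of_pos hD0 _)
    have hDm : D^(2*α+2*β+2) ≠ 0 := ne_of_gt (Real.rpow_pos_of_pos hD0 _)
    show a/D^(β+1) * (a/D^(β+1)) / (n/D^(2*α+2*β+2) + b/D^((2*α+2*β+1)+1)) =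
      a^2/(n+b) * D^(2*α)
    rw [em', ← add_div, e]
    field_simp
  have hTail : Tendsto (fun n : ℝ =>
      ((dO n:ℝ))^(2*α) * ∑' j : ℕ, ((j:ℝ)+((dO n:ℕ):ℝ)+1)^(-(2*α+1)))
      atTop (nhds (1/(2*α))) := by
    have := (tendsto_tail_mul (2*α) (by linarith)).comp hdtop
    exact this
  have hG : Tendsto (fun n : ℝ => R n * ((dO n:ℝ))^(2*α)) atTop
      (nhds (1/(β+1) + 1/(2*α))) := by
    apply Tendsto.congr' _ (hA.add hTail)
    filter_upwards [] with n
    rw [hR n]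
    ring
  have hH : Tendsto (fun n : ℝ => (((dO n:ℝ))^(2*α+2*β+2)/n)^(-γ)) atTop
      (nhds (L^γ)) := by
    have hc : ContinuousAt (fun x : ℝ => x^(-γ)) L⁻¹ :=
      Real.continuousAt_rpow_const L⁻¹ (-γ) (Or.inl (by positivity))
    have := hc.tendsto.comp hratio
    have hval : (L⁻¹)^(-γ) = L^γ := by
      rw [Real.inv_rpow hLpos.le, ← Real.rpow_neg hLpos.le, neg_neg]
    rwa [hval] at this
  have hone : (1/(β+1) + 1/(2*α)) * L^γ / B = 1 := by
    have hK : 1/(β+1) + 1/(2*α) = (2*α+β+1)/(2*α*(β+1)) := by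
      rw [div_add_div _ _ (ne_of_gt hβ1) (by positivity), div_eq_div_iff (by positivity) (by positivity)]
      ring
    rw [hK, ← hBdef]
    exact div_self (ne_of_gt hBpos)
  have hlim := (hG.mul hH).div_const B
  rw [hone] at hlim
  apply Tendsto.congr' _ hlim
  filter_upwards [eventually_gt_atTop 0, hdtop.eventually_ge_atTop 1] with n hn hd1
  set D := ((dO n : ℕ):ℝ) with hD
  have hD0 : (0:ℝ) < D := by
    rw [hD]; exact_mod_cast Nat.pos_of_ne_zero (by omega)
  have hn0 : (0:ℝ) < n := hn
  have e1 : (D^(2*α+2*β+2)/n)^(-γ) = D^(-(2*α)) * n^γ := by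
    rw [Real.div_rpow (Real.rpow_nonneg hD0.le _) hn0.le]
    rw [← Real.rpow_mul hD0.le]
    rw [show (2*α+2*β+2) * (-γ) = -(2*α) by rw [hγ]; field_simp]
    rw [Real.rpow_neg hn0.le, div_eq_mul_inv, inv_inv]
  have e3 : D^(2*α) * (D^(2*α+2*β+2)/n)^(-γ) = n^γ := by
    rw [e1, ← mul_assoc, ← Real.rpow_add hD0, show 2*α + -(2*α) = 0 by ring,
      Real.rpow_zero, one_mul]
  show R n * D^(2*α) * (D^(2*α+2*β+2)/n)^(-γ) / B = R n / (B * n^(-γ))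
  rw [mul_assoc, e3, Real.rpow_neg hn0.le]
  have hnγ : n^γ ≠ 0 := ne_of_gt (Real.rpow_pos_of_pos hn0 γ)
  field_simp
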